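/- For λ = 1 and 1 < p ≤ 5, the function φ(r,a) = −(p+3)/2 + (p−1)(a − r) tan(r) is negative for all r ∈ (0, a) whenever 0 < a ≤ π/2. -/
import Mathlib

open Real

theorem stmt7 (p a r : ℝ) (hp1 : 1 < p) (hp5 : p ≤ 5) (ha0 : 0 < a) (ha : a ≤ π/2)
    (hr : r ∈ Set.Ioo 0 a) :
    -(p+3)/2 + (p-1) * (a - r) * Real.tan r < 0 := by
  obtain ⟨hr0, hra⟩ := hr
  have hrπ : r < π/2 := lt_of_lt_of_le hra ha
  have hcos : 0 < Real.cos r := Real.cos_pos_of_mem_Ioo ⟨by linarith [Real.pi_pos], hrπ⟩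
  have hsin : 0 < Real.sin r := Real.sin_pos_of_pos_of_lt_pi hr0 (by linarith [Real.pi_pos])
  have htan : 0 < Real.tan r := by
    rw [Real.tan_eq_sin_div_cos]; positivity
  set x := π/2 - r with hx
  have hx0 : 0 < x := by simp [hx]; linarith
  have hxπ : x < π/2 := by simp [hx]; linarith
  have hcx : 0 < Real.cos x := Real.cos_pos_of_mem_Ioo ⟨by linarith [Real.pi_pos], hxπ⟩
  have hlt : x < Real.tan x := Real.lt_tan hx0 hxπ
  have h1 : x * Real.cos x < Real.sin x := by
    rw [Real.tan_eq_sin_div_cos] at hlt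
    calc x * Real.cos x < Real.sin x / Real.cos x * Real.cos x := by
          exact mul_lt_mul_of_pos_right hlt hcx
      _ = Real.sin x := by field_simp
  have hsx : Real.sin x = Real.cos r := by rw [hx, Real.sin_pi_div_two_sub]
  have hcxr : Real.cos x = Real.sin r := by rw [hx, Real.cos_pi_div_two_sub]
  have key : (π/2 - r) * Real.tan r < 1 := by
    rw [Real.tan_eq_sin_div_cos]
    rw [hsx, hcxr] at h1
    rw [mul_div_assoc', div_lt_one hcos]
    exact h1
  have h2 : (a - r) * Real.tan r ≤ (π/2 - r) * Real.tan r :=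
    mul_le_mul_of_nonneg_right (by linarith) (le_of_lt htan)
  nlinarith [key, h2]
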